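/- (Converse for the non-asymptotic minimum average erasure cost.) Let (X_i,Y_i), i=1..n, be i.i.d. on finite 𝒳×𝒴, c: 𝒳×X̂ → [0,∞), and let f_n: 𝒳^n → X̂^n be a stochastic encoder with output X̂^n = f_n(X^n) (so Y^n − X^n − X̂^n). If I(Y^n; X̂^n) ≤ ε and E[(1/n)Σ_i c(X_i, X̂_i)] ≤ Γ, then Γ ≥ min over RVs X̂ with Y − X − X̂ and I(Y; X̂) ≤ ε/n of E[c(X, X̂)]. -/

import Mathlib

open scoped BigOperators

noncomputable def MI {α β : Type*} [Fintype α] [Fintype β] (p : α → β → ℝ) : ℝ :=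
  ∑ a, ∑ b, p a b * Real.log (p a b / ((∑ b', p a b') * (∑ a', p a' b)))

def IsPMF2 {α β : Type*} [Fintype α] [Fintype β] (p : α → β → ℝ) : Prop :=
  (∀ a b, 0 ≤ p a b) ∧ ∑ a, ∑ b, p a b = 1

def IsChannel {α β : Type*} [Fintype β] (K : α → β → ℝ) : Prop :=
  (∀ a b, 0 ≤ K a b) ∧ ∀ a, ∑ b, K a b = 1

/-- Joint pmf of `(Y^n, X^n, X̂^n)` where `(X_i,Y_i)` are i.i.d. `∼ pxy`
and `X̂^n` is produced from `X^n` by the channel `W`. -/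
noncomputable def iidJoint {X Y Xh : Type*} [Fintype X] (n : ℕ) (pxy : X → Y → ℝ)
    (W : (Fin n → X) → (Fin n → Xh) → ℝ) :
    (Fin n → Y) → (Fin n → X) → (Fin n → Xh) → ℝ :=
  fun yn xn zn => (∏ i, pxy (xn i) (yn i)) * W xn zn

/-- Expected additive cost `E[(1/n) ∑_i c(X_i, X̂_i)]` for the i.i.d. source with
one-letter joint `pxy` and encoder `W`. -/
noncomputable def costn {X Y Xh : Type*} [Fintype X] [Fintype Y] [Fintype Xh] (n : ℕ)
    (pxy : X → Y → ℝ) (W : (Fin n → X) → (Fin n → Xh) → ℝ) (c : X → Xh → ℝ) : ℝ :=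
  ∑ xn, ∑ zn, (∏ i, ∑ y, pxy (xn i) y) * W xn zn * ((1 / (n : ℝ)) * ∑ i, c (xn i) (zn i))

/-- Single-letter joint pmf of `(Y, X̂)` under the Markov chain `Y − X − X̂`. -/
noncomputable def singleYZ {X Y Xh : Type*} [Fintype X] (pxy : X → Y → ℝ)
    (K : X → Xh → ℝ) : Y → Xh → ℝ :=
  fun y z => ∑ x, pxy x y * K x z

/-- Single-letter expected cost `E[c(X, X̂)]`. -/
noncomputable def singleCost {X Y Xh : Type*} [Fintype X] [Fintype Y] [Fintype Xh]
    (pxy : X → Y → ℝ) (K : X → Xh → ℝ) (c : X → Xh → ℝ) : ℝ :=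
  ∑ x, ∑ z, (∑ y, pxy x y) * K x z * c x z

open Finset

/-- Log-sum inequality. -/
lemma log_sum_ineq {ι : Type*} (s : Finset ι) (a b : ι → ℝ)
    (ha : ∀ i ∈ s, 0 ≤ a i) (hb : ∀ i ∈ s, 0 ≤ b i)
    (hab : ∀ i ∈ s, 0 < a i → 0 < b i) :
    (∑ i ∈ s, a i) * Real.log ((∑ i ∈ s, a i) / (∑ i ∈ s, b i)) ≤
      ∑ i ∈ s, a i * Real.log (a i / b i) := by
  set A := ∑ i ∈ s, a i with hA
  set B := ∑ i ∈ s, b i with hB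
  rcases eq_or_lt_of_le (Finset.sum_nonneg ha) with h0 | hApos
  · -- A = 0 : all a i = 0
    have hz : ∀ i ∈ s, a i = 0 := by
      intro i hi
      have := (Finset.sum_eq_zero_iff_of_nonneg ha).1 h0.symm
      exact this i hi
    have hA0 : A = 0 := by rw [hA, ← h0]
    have hR : ∑ i ∈ s, a i * Real.log (a i / b i) = 0 :=
      Finset.sum_eq_zero (fun i hi => by rw [hz i hi, zero_mul])
    rw [hA0, hR, zero_mul]
  · have hBpos : 0 < B := by
      obtain ⟨i, hi, hai⟩ : ∃ i ∈ s, 0 < a i := by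
        by_contra h
        push_neg at h
        have : A ≤ 0 := Finset.sum_nonpos h
        linarith
      exact lt_of_lt_of_le (hab i hi hai)
        (Finset.single_le_sum hb hi)
    have key : ∀ i ∈ s, a i - b i * (A / B) ≤
        a i * (Real.log (a i / b i) - Real.log (A / B)) := by
      intro i hi
      rcases eq_or_lt_of_le (ha i hi) with h0i | hai
      · rw [← h0i]
        have : 0 ≤ b i * (A / B) :=
          mul_nonneg (hb i hi) (div_nonneg (le_of_lt hApos) (le_of_lt hBpos))
        simp only [zero_mul, zero_sub]
        linarith
      · have hbi := hab i hi hai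
        have hx : (0:ℝ) < (b i * A) / (a i * B) := by positivity
        have hlog := Real.log_le_sub_one_of_pos hx
        have hrw : Real.log ((b i * A) / (a i * B)) =
            Real.log (A / B) - Real.log (a i / b i) := by
          rw [Real.log_div (by positivity) (by positivity),
            Real.log_mul (ne_of_gt hbi) (ne_of_gt hApos),
            Real.log_mul (ne_of_gt hai) (ne_of_gt hBpos),
            Real.log_div (ne_of_gt hApos) (ne_of_gt hBpos),
            Real.log_div (ne_of_gt hai) (ne_of_gt hbi)]
          ring
        rw [hrw] at hlog
        have h1 : 1 - (b i * A) / (a i * B) ≤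
            Real.log (a i / b i) - Real.log (A / B) := by linarith
        have := mul_le_mul_of_nonneg_left h1 (le_of_lt hai)
        calc a i - b i * (A / B) = a i * (1 - (b i * A) / (a i * B)) := by
              field_simp
          _ ≤ a i * (Real.log (a i / b i) - Real.log (A / B)) := this
    have hsum := Finset.sum_le_sum key
    have hL : ∑ i ∈ s, (a i - b i * (A / B)) = 0 := by
      rw [Finset.sum_sub_distrib, ← Finset.sum_mul, ← hA, ← hB]
      field_simp
      ring
    have hR : ∑ i ∈ s, a i * (Real.log (a i / b i) - Real.log (A / B)) =
        (∑ i ∈ s, a i * Real.log (a i / b i)) - A * Real.log (A / B) := by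
      rw [Finset.sum_congr rfl (fun i _ => mul_sub (a i) _ _),
        Finset.sum_sub_distrib, ← Finset.sum_mul, ← hA]
    rw [hL, hR] at hsum
    linarith

/-- Gibbs' inequality. -/
lemma gibbs_ineq {ι : Type*} (s : Finset ι) (a b : ι → ℝ)
    (ha : ∀ i ∈ s, 0 ≤ a i) (hb : ∀ i ∈ s, 0 ≤ b i)
    (hab : ∀ i ∈ s, 0 < a i → 0 < b i)
    (hsa : ∑ i ∈ s, a i = 1) (hsb : ∑ i ∈ s, b i ≤ 1) :
    0 ≤ ∑ i ∈ s, a i * Real.log (a i / b i) := by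
  have hBpos : 0 < ∑ i ∈ s, b i := by
    obtain ⟨i, hi, hai⟩ : ∃ i ∈ s, 0 < a i := by
      by_contra h
      push_neg at h
      have : (∑ i ∈ s, a i) ≤ 0 := Finset.sum_nonpos h
      rw [hsa] at this; linarith
    exact lt_of_lt_of_le (hab i hi hai) (Finset.single_le_sum hb hi)
  have h := log_sum_ineq s a b ha hb hab
  rw [hsa, one_mul] at h
  refine le_trans ?_ h
  rw [Real.log_div one_ne_zero (ne_of_gt hBpos), Real.log_one]
  have := Real.log_nonpos (le_of_lt hBpos) hsb
  linarith

/-- Sum over functions of a product with one coordinate pinned. -/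
lemma sum_pi_ite {ι α : Type*} [Fintype ι] [DecidableEq ι] [Fintype α] [DecidableEq α]
    (f : ι → α → ℝ) (i : ι) (a : α) :
    ∑ g : ι → α, (if g i = a then 1 else 0) * ∏ j, f j (g j)
      = f i a * ∏ j ∈ univ.erase i, ∑ b, f j b := by
  classical
  set f' : ι → α → ℝ := fun j b => if j = i then (if b = a then f i b else 0) else f j b
    with hf'
  have h1 : ∀ g : ι → α, (if g i = a then 1 else 0) * ∏ j, f j (g j)
      = ∏ j, f' j (g j) := by
    intro g
    rw [← Finset.mul_prod_erase univ (fun j => f' j (g j)) (mem_univ i),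
      ← Finset.mul_prod_erase univ (fun j => f j (g j)) (mem_univ i)]
    have h2 : ∏ j ∈ univ.erase i, f' j (g j) = ∏ j ∈ univ.erase i, f j (g j) := by
      refine Finset.prod_congr rfl (fun j hj => ?_)
      have : j ≠ i := (Finset.mem_erase.1 hj).1
      simp [hf', this]
    rw [h2]
    by_cases hg : g i = a <;> simp [hf', hg]
  rw [Finset.sum_congr rfl (fun g _ => h1 g), ← Fintype.prod_sum f']
  rw [← Finset.mul_prod_erase univ (fun j => ∑ b, f' j b) (mem_univ i)]
  have h3 : ∑ b, f' i b = f i a := by simp [hf']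
  have h4 : ∏ j ∈ univ.erase i, ∑ b, f' j b = ∏ j ∈ univ.erase i, ∑ b, f j b := by
    refine Finset.prod_congr rfl (fun j hj => ?_)
    have : j ≠ i := (Finset.mem_erase.1 hj).1
    simp [hf', this]
  rw [h3, h4]

/-- Marginal joint of the `i`-th coordinates. -/
noncomputable def margin {Y Z : Type*} [Fintype Y] [Fintype Z] [DecidableEq Y] [DecidableEq Z]
    {n : ℕ} (q : (Fin n → Y) → (Fin n → Z) → ℝ) (i : Fin n) : Y → Z → ℝ :=
  fun y z => ∑ yn, ∑ zn, (if yn i = y then 1 else 0) * (if zn i = z then 1 else 0) * q yn zn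

section margins
variable {Y Z : Type*} [Fintype Y] [Fintype Z] [DecidableEq Y] [DecidableEq Z]
  {n : ℕ} (q : (Fin n → Y) → (Fin n → Z) → ℝ) (i : Fin n)

lemma margin_nonneg (hq0 : ∀ yn zn, 0 ≤ q yn zn) (y : Y) (z : Z) :
    0 ≤ margin q i y z :=
  Finset.sum_nonneg fun _ _ => Finset.sum_nonneg fun _ _ => by
    have := hq0 ‹_› ‹_›
    positivity

lemma sum_swap4 {A B C D : Type*} [Fintype A] [Fintype B] [Fintype C] [Fintype D]
    (F : A → B → C → D → ℝ) :
    ∑ a, ∑ b, ∑ c, ∑ d, F a b c d = ∑ c, ∑ d, ∑ a, ∑ b, F a b c d :=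
  calc ∑ a, ∑ b, ∑ c, ∑ d, F a b c d
      = ∑ a, ∑ c, ∑ b, ∑ d, F a b c d :=
        Finset.sum_congr rfl fun _ _ => Finset.sum_comm
    _ = ∑ c, ∑ a, ∑ b, ∑ d, F a b c d := Finset.sum_comm
    _ = ∑ c, ∑ a, ∑ d, ∑ b, F a b c d :=
        Finset.sum_congr rfl fun _ _ => Finset.sum_congr rfl fun _ _ => Finset.sum_comm
    _ = ∑ c, ∑ d, ∑ a, ∑ b, F a b c d :=
        Finset.sum_congr rfl fun _ _ => Finset.sum_comm

/-- Marginal expectation lemma. -/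
lemma margin_exp (g : Y → Z → ℝ) :
    ∑ y, ∑ z, margin q i y z * g y z = ∑ yn, ∑ zn, q yn zn * g (yn i) (zn i) := by
  unfold margin
  simp only [Finset.sum_mul]
  rw [sum_swap4 (fun y z yn zn =>
    (if yn i = y then (1:ℝ) else 0) * (if zn i = z then 1 else 0) * q yn zn * g y z)]
  refine Finset.sum_congr rfl fun yn _ => Finset.sum_congr rfl fun zn _ => ?_
  simp [ite_mul, Finset.sum_ite_eq]

/-- The per-coordinate marginal of `q` over `z` lower-bounds nothing;
individual terms are below the marginal. -/
lemma le_margin (hq0 : ∀ yn zn, 0 ≤ q yn zn) (yn : Fin n → Y) (zn : Fin n → Z) :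
    q yn zn ≤ margin q i (yn i) (zn i) := by
  unfold margin
  have h1 : ∀ yn' : Fin n → Y, (0:ℝ) ≤ ∑ zn',
      (if yn' i = yn i then (1:ℝ) else 0) * (if zn' i = zn i then 1 else 0) * q yn' zn' := by
    intro yn'
    refine Finset.sum_nonneg fun zn' _ => ?_
    have := hq0 yn' zn'
    positivity
  refine le_trans ?_ (Finset.single_le_sum (fun yn' _ => h1 yn') (Finset.mem_univ yn))
  have h2 : ∀ zn' : Fin n → Z, (0:ℝ) ≤
      (if yn i = yn i then (1:ℝ) else 0) * (if zn' i = zn i then 1 else 0) * q yn zn' := by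
    intro zn'
    have := hq0 yn zn'
    positivity
  refine le_trans ?_ (Finset.single_le_sum (fun zn' _ => h2 zn') (Finset.mem_univ zn))
  simp

end margins

section super
variable {Y Z : Type*} [Fintype Y] [Fintype Z] [DecidableEq Y] [DecidableEq Z]
  {n : ℕ} (q : (Fin n → Y) → (Fin n → Z) → ℝ) (pY : Y → ℝ)

lemma sum_swap3 {A B C : Type*} [Fintype A] [Fintype B] [Fintype C]
    (F : A → B → C → ℝ) :
    ∑ a, ∑ b, ∑ c, F a b c = ∑ b, ∑ c, ∑ a, F a b c :=
  calc ∑ a, ∑ b, ∑ c, F a b c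
      = ∑ b, ∑ a, ∑ c, F a b c := Finset.sum_comm
    _ = ∑ b, ∑ c, ∑ a, F a b c := Finset.sum_congr rfl fun _ _ => Finset.sum_comm

/-- Row marginal of the coordinate marginal. -/
lemma margin_row (hpY1 : ∑ y, pY y = 1)
    (hrow : ∀ yn, ∑ zn, q yn zn = ∏ j, pY (yn j)) (i : Fin n) (y : Y) :
    ∑ z, margin q i y z = pY y := by
  unfold margin
  rw [sum_swap3 (fun z yn zn =>
    (if yn i = y then (1:ℝ) else 0) * (if zn i = z then 1 else 0) * q yn zn)]
  have h1 : ∀ yn zn, ∑ z, (if yn i = y then (1:ℝ) else 0) *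
      (if zn i = z then 1 else 0) * q yn zn
      = (if yn i = y then (1:ℝ) else 0) * q yn zn := by
    intro yn zn
    by_cases h : yn i = y <;> simp [h, ite_mul, Finset.sum_ite_eq]
  rw [Finset.sum_congr rfl fun yn _ => Finset.sum_congr rfl fun zn _ => h1 yn zn]
  have h2 : ∀ yn : Fin n → Y, ∑ zn, (if yn i = y then (1:ℝ) else 0) * q yn zn
      = (if yn i = y then (1:ℝ) else 0) * ∏ j, pY (yn j) := by
    intro yn
    rw [← Finset.mul_sum, hrow yn]
  rw [Finset.sum_congr rfl fun yn _ => h2 yn]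
  have h3 := sum_pi_ite (fun _ : Fin n => pY) i y
  simpa [hpY1] using h3

/-- Superadditivity of mutual information for i.i.d.-marginal `Y`-part. -/
lemma superadd (hq0 : ∀ yn zn, 0 ≤ q yn zn) (hq1 : ∑ yn, ∑ zn, q yn zn = 1)
    (hpY0 : ∀ y, 0 ≤ pY y) (hpY1 : ∑ y, pY y = 1)
    (hrow : ∀ yn, ∑ zn, q yn zn = ∏ j, pY (yn j)) :
    ∑ i : Fin n, (∑ y, ∑ z, margin q i y z *
        Real.log (margin q i y z / (pY y * (∑ y', margin q i y' z)))) ≤ MI q := by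
  classical
  set p : Fin n → Y → Z → ℝ := margin q with hp
  set rZ : Fin n → Z → ℝ := fun i z => ∑ y', p i y' z with hrZ
  set colq : (Fin n → Z) → ℝ := fun zn => ∑ yn', q yn' zn with hcolq
  set g : (Fin n → Y) → (Fin n → Z) → ℝ :=
    fun yn zn => colq zn * ∏ i, (p i (yn i) (zn i) / rZ i (zn i)) with hg
  have hrowm : ∀ (i : Fin n) (y : Y), ∑ z, p i y z = pY y :=
    fun i y => margin_row q pY hpY1 hrow i y
  -- rewrite the LHS using margin_exp
  have hL : ∑ i : Fin n, (∑ y, ∑ z, p i y z *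
        Real.log (p i y z / (pY y * rZ i z)))
      = ∑ yn, ∑ zn, q yn zn *
          ∑ i, Real.log (p i (yn i) (zn i) / (pY (yn i) * rZ i (zn i))) := by
    have h2 : ∀ i : Fin n, (∑ y, ∑ z, p i y z *
        Real.log (p i y z / (pY y * rZ i z)))
        = ∑ yn, ∑ zn, q yn zn *
            Real.log (p i (yn i) (zn i) / (pY (yn i) * rZ i (zn i))) := by
      intro i
      exact margin_exp q i (fun y z => Real.log (p i y z / (pY y * rZ i z)))
    rw [Finset.sum_congr rfl fun i _ => h2 i, sum_swap3 (fun i yn zn =>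
      q yn zn * Real.log (p i (yn i) (zn i) / (pY (yn i) * rZ i (zn i))))]
    exact Finset.sum_congr rfl fun yn _ => Finset.sum_congr rfl fun zn _ =>
      (Finset.mul_sum _ _ _).symm
  -- pointwise positivity facts under q > 0
  have hptw : ∀ yn zn, 0 < q yn zn →
      (∀ j : Fin n, 0 < p j (yn j) (zn j)) ∧ (∀ j, 0 < rZ j (zn j)) ∧
      (∀ j, 0 < pY (yn j)) ∧ 0 < colq zn := by
    intro yn zn hq
    have hpj : ∀ j : Fin n, 0 < p j (yn j) (zn j) :=
      fun j => lt_of_lt_of_le hq (le_margin q j hq0 yn zn)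
    refine ⟨hpj, fun j => ?_, fun j => ?_, ?_⟩
    · exact lt_of_lt_of_le (hpj j)
        (Finset.single_le_sum (fun y _ => margin_nonneg q j hq0 y (zn j))
          (Finset.mem_univ (yn j)))
    · rw [← hrowm j (yn j)]
      exact lt_of_lt_of_le (hpj j)
        (Finset.single_le_sum (fun z _ => margin_nonneg q j hq0 (yn j) z)
          (Finset.mem_univ (zn j)))
    · exact lt_of_lt_of_le hq
        (Finset.single_le_sum (fun yn' _ => hq0 yn' zn) (Finset.mem_univ yn))
  -- pointwise identity
  have hpoint : ∀ yn zn,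
      q yn zn * Real.log (q yn zn / ((∑ zn', q yn zn') * colq zn))
        - q yn zn * ∑ i, Real.log (p i (yn i) (zn i) / (pY (yn i) * rZ i (zn i)))
      = q yn zn * Real.log (q yn zn / g yn zn) := by
    intro yn zn
    rcases eq_or_lt_of_le (hq0 yn zn) with h0 | hqpos
    · rw [← h0]; ring
    · obtain ⟨hpj, hrZj, hpYj, hcol⟩ := hptw yn zn hqpos
      have hrowpos : 0 < ∑ zn', q yn zn' := by
        rw [hrow yn]; exact Finset.prod_pos fun j _ => hpYj j
      have hgpos : 0 < g yn zn := by
        refine mul_pos hcol (Finset.prod_pos fun j _ => div_pos (hpj j) (hrZj j))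
      have e1 : Real.log (q yn zn / ((∑ zn', q yn zn') * colq zn))
          = Real.log (q yn zn) - (∑ j, Real.log (pY (yn j))) - Real.log (colq zn) := by
        rw [Real.log_div (ne_of_gt hqpos) (ne_of_gt (mul_pos hrowpos hcol)),
          Real.log_mul (ne_of_gt hrowpos) (ne_of_gt hcol), hrow yn,
          Real.log_prod (fun j _ => ne_of_gt (hpYj j))]
        ring
      have e2 : ∀ j : Fin n, Real.log (p j (yn j) (zn j) / (pY (yn j) * rZ j (zn j)))
          = Real.log (p j (yn j) (zn j)) - Real.log (pY (yn j)) - Real.log (rZ j (zn j)) := by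
        intro j
        rw [Real.log_div (ne_of_gt (hpj j)) (ne_of_gt (mul_pos (hpYj j) (hrZj j))),
          Real.log_mul (ne_of_gt (hpYj j)) (ne_of_gt (hrZj j))]
        ring
      have e3 : Real.log (q yn zn / g yn zn)
          = Real.log (q yn zn) - Real.log (colq zn)
            - ∑ j, (Real.log (p j (yn j) (zn j)) - Real.log (rZ j (zn j))) := by
        rw [Real.log_div (ne_of_gt hqpos) (ne_of_gt hgpos), hg]
        simp only
        rw [Real.log_mul (ne_of_gt hcol)
            (ne_of_gt (Finset.prod_pos fun j _ => div_pos (hpj j) (hrZj j))),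
          Real.log_prod (fun j _ => ne_of_gt (div_pos (hpj j) (hrZj j)))]
        rw [Finset.sum_congr rfl fun j _ =>
          Real.log_div (ne_of_gt (hpj j)) (ne_of_gt (hrZj j))]
        ring
      have hS : ∑ j : Fin n, (Real.log (p j (yn j) (zn j)) - Real.log (pY (yn j))
            - Real.log (rZ j (zn j)))
          = (∑ j : Fin n, (Real.log (p j (yn j) (zn j)) - Real.log (rZ j (zn j))))
            - ∑ j : Fin n, Real.log (pY (yn j)) := by
        rw [← Finset.sum_sub_distrib]
        exact Finset.sum_congr rfl fun j _ => by ring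
      rw [e1, Finset.sum_congr rfl fun j _ => e2 j, hS, e3]
      ring
  -- sum of g is at most 1
  have hgsum : ∑ yn, ∑ zn, g yn zn ≤ 1 := by
    have h4 : ∀ zn, ∑ yn, g yn zn ≤ colq zn := by
      intro zn
      have h5 : ∑ yn, g yn zn
          = colq zn * ∏ i, ((∑ y, p i y (zn i)) / rZ i (zn i)) := by
        simp only [hg]
        rw [← Finset.mul_sum]
        congr 1
        rw [← Fintype.prod_sum (fun i y => p i y (zn i) / rZ i (zn i))]
        exact (Finset.prod_congr rfl fun i _ => by rw [Finset.sum_div]).symm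
      rw [h5]
      have h6 : ∏ i, ((∑ y, p i y (zn i)) / rZ i (zn i)) ≤ 1 := by
        refine Finset.prod_le_one (fun i _ => ?_) (fun i _ => ?_)
        · exact div_nonneg (Finset.sum_nonneg fun y _ => margin_nonneg q i hq0 y (zn i))
            (Finset.sum_nonneg fun y _ => margin_nonneg q i hq0 y (zn i))
        · show rZ i (zn i) / rZ i (zn i) ≤ 1
          rcases eq_or_ne (rZ i (zn i)) 0 with h | h
          · rw [h]; simp
          · rw [div_self h]
      have hcolnn : 0 ≤ colq zn := Finset.sum_nonneg fun yn' _ => hq0 yn' zn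
      exact mul_le_of_le_one_right hcolnn h6
    calc ∑ yn, ∑ zn, g yn zn = ∑ zn, ∑ yn, g yn zn := Finset.sum_comm
      _ ≤ ∑ zn, colq zn := Finset.sum_le_sum fun zn _ => h4 zn
      _ = 1 := by simp only [hcolq]; rw [Finset.sum_comm]; exact hq1
  -- Gibbs
  have hgibbs : 0 ≤ ∑ yn, ∑ zn, q yn zn * Real.log (q yn zn / g yn zn) := by
    have := gibbs_ineq (Finset.univ : Finset ((Fin n → Y) × (Fin n → Z)))
      (fun w => q w.1 w.2) (fun w => g w.1 w.2)
      (fun w _ => hq0 w.1 w.2)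
      (fun w _ => mul_nonneg (Finset.sum_nonneg fun yn' _ => hq0 yn' w.2)
        (Finset.prod_nonneg fun j _ => div_nonneg
          (margin_nonneg q j hq0 (w.1 j) (w.2 j))
          (Finset.sum_nonneg fun y _ => margin_nonneg q j hq0 y (w.2 j))))
      (fun w _ hw => by
        obtain ⟨hpj, hrZj, _, hcol⟩ := hptw w.1 w.2 hw
        exact mul_pos hcol (Finset.prod_pos fun j _ => div_pos (hpj j) (hrZj j)))
      (by rw [Fintype.sum_prod_type]; exact hq1)
      (by rw [Fintype.sum_prod_type]; exact hgsum)
    rwa [Fintype.sum_prod_type] at this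
  -- assemble
  rw [hL]
  unfold MI
  have final : ∑ yn, ∑ zn, (q yn zn *
        Real.log (q yn zn / ((∑ zn', q yn zn') * colq zn))
      - q yn zn * ∑ i, Real.log (p i (yn i) (zn i) / (pY (yn i) * rZ i (zn i))))
      = ∑ yn, ∑ zn, q yn zn * Real.log (q yn zn / g yn zn) :=
    Finset.sum_congr rfl fun yn _ => Finset.sum_congr rfl fun zn _ => hpoint yn zn
  rw [Finset.sum_congr rfl fun yn (_ : yn ∈ univ) => Finset.sum_sub_distrib _ _,
    Finset.sum_sub_distrib] at final
  have : ∑ yn, ∑ zn, q yn zn *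
      ∑ i, Real.log (p i (yn i) (zn i) / (pY (yn i) * rZ i (zn i)))
      ≤ ∑ yn, ∑ zn, q yn zn *
        Real.log (q yn zn / ((∑ zn', q yn zn') * colq zn)) := by linarith
  exact this

end super

/-- Convexity: MI of an average of joints with common `Y`-marginal is at most the
average of the MIs. -/
lemma mi_avg_le {Y Z : Type*} [Fintype Y] [Fintype Z] {n : ℕ} (hn : 0 < n)
    (p : Fin n → Y → Z → ℝ) (pY : Y → ℝ)
    (hp0 : ∀ i y z, 0 ≤ p i y z) (hrow : ∀ i y, ∑ z, p i y z = pY y) :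
    MI (fun y z => (n:ℝ)⁻¹ * ∑ i, p i y z)
      ≤ (n:ℝ)⁻¹ * ∑ i, ∑ y, ∑ z, p i y z *
          Real.log (p i y z / (pY y * ∑ y', p i y' z)) := by
  have hnR : (0:ℝ) < n := Nat.cast_pos.2 hn
  have hninv : (0:ℝ) < (n:ℝ)⁻¹ := inv_pos.2 hnR
  have hpY0 : ∀ y, 0 ≤ pY y := by
    intro y
    rw [← hrow ⟨0, hn⟩ y]
    exact Finset.sum_nonneg fun z _ => hp0 _ y z
  have hrowbar : ∀ y, ∑ z', (n:ℝ)⁻¹ * ∑ i, p i y z' = pY y := by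
    intro y
    rw [← Finset.mul_sum, Finset.sum_comm,
      Finset.sum_congr rfl fun i (_ : i ∈ univ) => hrow i y,
      Finset.sum_const, Finset.card_univ, Fintype.card_fin, nsmul_eq_mul,
      inv_mul_cancel_left₀ (ne_of_gt hnR)]
  have key : ∀ y z,
      ((n:ℝ)⁻¹ * ∑ i, p i y z) *
        Real.log (((n:ℝ)⁻¹ * ∑ i, p i y z) /
          ((∑ z', (n:ℝ)⁻¹ * ∑ i, p i y z') * (∑ y', (n:ℝ)⁻¹ * ∑ i, p i y' z)))
      ≤ ∑ i, (n:ℝ)⁻¹ * (p i y z *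
          Real.log (p i y z / (pY y * ∑ y', p i y' z))) := by
    intro y z
    have h := log_sum_ineq (univ : Finset (Fin n))
      (fun i => (n:ℝ)⁻¹ * p i y z)
      (fun i => (n:ℝ)⁻¹ * (pY y * ∑ y', p i y' z))
      (fun i _ => mul_nonneg (le_of_lt hninv) (hp0 i y z))
      (fun i _ => mul_nonneg (le_of_lt hninv) (mul_nonneg (hpY0 y)
        (Finset.sum_nonneg fun y' _ => hp0 i y' z)))
      (fun i _ hi => by
        have hi' : 0 < (n:ℝ)⁻¹ * p i y z := hi
        have hpi : 0 < p i y z := by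
          by_contra hle
          push_neg at hle
          have h0 : p i y z = 0 := le_antisymm hle (hp0 i y z)
          rw [h0, mul_zero] at hi'
          exact lt_irrefl 0 hi' 
        have h1 : 0 < pY y := by
          rw [← hrow i y]
          exact lt_of_lt_of_le hpi
            (Finset.single_le_sum (fun z' _ => hp0 i y z') (Finset.mem_univ z))
        have h2 : 0 < ∑ y', p i y' z :=
          lt_of_lt_of_le hpi
            (Finset.single_le_sum (fun y' _ => hp0 i y' z) (Finset.mem_univ y))
        exact mul_pos hninv (mul_pos h1 h2))
    have hA : ∑ i, (n:ℝ)⁻¹ * p i y z = (n:ℝ)⁻¹ * ∑ i, p i y z :=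
      (Finset.mul_sum _ _ _).symm
    have hB : ∑ i, (n:ℝ)⁻¹ * (pY y * ∑ y', p i y' z)
        = (∑ z', (n:ℝ)⁻¹ * ∑ i, p i y z') * (∑ y', (n:ℝ)⁻¹ * ∑ i, p i y' z) := by
      rw [hrowbar y]
      have h1 : ∑ y', (n:ℝ)⁻¹ * ∑ i, p i y' z = (n:ℝ)⁻¹ * ∑ i, ∑ y', p i y' z := by
        rw [← Finset.mul_sum, Finset.sum_comm]
      rw [h1, ← Finset.mul_sum]
      rw [← Finset.mul_sum]
      ring
    have hterm : ∀ i : Fin n,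
        ((n:ℝ)⁻¹ * p i y z) * Real.log (((n:ℝ)⁻¹ * p i y z) /
          ((n:ℝ)⁻¹ * (pY y * ∑ y', p i y' z)))
        = (n:ℝ)⁻¹ * (p i y z * Real.log (p i y z / (pY y * ∑ y', p i y' z))) := by
      intro i
      rw [mul_div_mul_left _ _ (ne_of_gt hninv)]
      ring
    rw [hA, hB] at h
    calc ((n:ℝ)⁻¹ * ∑ i, p i y z) *
          Real.log (((n:ℝ)⁻¹ * ∑ i, p i y z) /
            ((∑ z', (n:ℝ)⁻¹ * ∑ i, p i y z') * (∑ y', (n:ℝ)⁻¹ * ∑ i, p i y' z)))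
        ≤ ∑ i, ((n:ℝ)⁻¹ * p i y z) * Real.log (((n:ℝ)⁻¹ * p i y z) /
            ((n:ℝ)⁻¹ * (pY y * ∑ y', p i y' z))) := h
      _ = ∑ i, (n:ℝ)⁻¹ * (p i y z *
            Real.log (p i y z / (pY y * ∑ y', p i y' z))) :=
          Finset.sum_congr rfl fun i _ => hterm i
  unfold MI
  calc ∑ y, ∑ z, ((n:ℝ)⁻¹ * ∑ i, p i y z) *
        Real.log (((n:ℝ)⁻¹ * ∑ i, p i y z) /
          ((∑ z', (n:ℝ)⁻¹ * ∑ i, p i y z') * (∑ y', (n:ℝ)⁻¹ * ∑ i, p i y' z)))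
      ≤ ∑ y, ∑ z, ∑ i, (n:ℝ)⁻¹ * (p i y z *
          Real.log (p i y z / (pY y * ∑ y', p i y' z))) :=
        Finset.sum_le_sum fun y _ => Finset.sum_le_sum fun z _ => key y z
    _ = ∑ i, ∑ y, ∑ z, (n:ℝ)⁻¹ * (p i y z *
          Real.log (p i y z / (pY y * ∑ y', p i y' z))) := by
        rw [sum_swap3 (fun y z i => (n:ℝ)⁻¹ * (p i y z *
          Real.log (p i y z / (pY y * ∑ y', p i y' z))))]
        exact sum_swap3 _
    _ = (n:ℝ)⁻¹ * ∑ i, ∑ y, ∑ z, p i y z *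
          Real.log (p i y z / (pY y * ∑ y', p i y' z)) := by
        rw [Finset.mul_sum]
        refine Finset.sum_congr rfl fun i _ => ?_
        rw [Finset.mul_sum]
        refine Finset.sum_congr rfl fun y _ => ?_
        rw [Finset.mul_sum]

/-- The `i`-th one-letter channel induced by `W` with input distribution `pX`. -/
noncomputable def avgChan {X Xh : Type*} [Fintype X] [Fintype Xh] [DecidableEq X]
    [DecidableEq Xh] {n : ℕ} (pX : X → ℝ) (W : (Fin n → X) → (Fin n → Xh) → ℝ)
    (i : Fin n) : X → Xh → ℝ :=
  fun x z => ∑ xn, ∑ zn, (if xn i = x then 1 else 0) * (if zn i = z then 1 else 0) *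
    ((∏ j ∈ univ.erase i, pX (xn j)) * W xn zn)

section chan
variable {X Xh : Type*} [Fintype X] [Fintype Xh] [DecidableEq X] [DecidableEq Xh]
  {n : ℕ} (pX : X → ℝ) (W : (Fin n → X) → (Fin n → Xh) → ℝ) (i : Fin n)

lemma avgChan_nonneg (hpX0 : ∀ x, 0 ≤ pX x) (hW0 : ∀ xn zn, 0 ≤ W xn zn) (x : X) (z : Xh) :
    0 ≤ avgChan pX W i x z := by
  refine Finset.sum_nonneg fun xn _ => Finset.sum_nonneg fun zn _ => ?_
  have h1 : (0:ℝ) ≤ ∏ j ∈ univ.erase i, pX (xn j) :=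
    Finset.prod_nonneg fun j _ => hpX0 (xn j)
  have h2 := hW0 xn zn
  positivity

lemma sum_ite_indicator {α : Type*} [Fintype α] [DecidableEq α] (t : α) :
    ∑ x : α, (if t = x then (1:ℝ) else 0) = 1 := by
  simp [Finset.sum_ite_eq]

lemma sum_ite_erase_prod (hpX1 : ∑ x, pX x = 1) (x : X) :
    ∑ xn : Fin n → X, (if xn i = x then (1:ℝ) else 0) * ∏ j ∈ univ.erase i, pX (xn j)
      = 1 := by
  set f : Fin n → X → ℝ := fun j b => if j = i then 1 else pX b with hf
  have hprod : ∀ xn : Fin n → X,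
      ∏ j ∈ univ.erase i, pX (xn j) = ∏ j, f j (xn j) := by
    intro xn
    rw [← Finset.mul_prod_erase univ (fun j => f j (xn j)) (mem_univ i)]
    have h1 : f i (xn i) = 1 := by simp [hf]
    rw [h1, one_mul]
    exact Finset.prod_congr rfl fun j hj => by
      simp [hf, (Finset.mem_erase.1 hj).1]
  rw [Finset.sum_congr rfl fun xn _ => by rw [hprod xn]]
  rw [sum_pi_ite f i x]
  have h2 : f i x = 1 := by simp [hf]
  rw [h2, one_mul]
  refine Finset.prod_eq_one fun j hj => ?_
  have : j ≠ i := (Finset.mem_erase.1 hj).1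
  simp [hf, this, hpX1]

lemma avgChan_sum (hpX1 : ∑ x, pX x = 1) (hW2 : ∀ xn, ∑ zn, W xn zn = 1) (x : X) :
    ∑ z, avgChan pX W i x z = 1 := by
  unfold avgChan
  rw [sum_swap3 (fun (z : Xh) (xn : Fin n → X) (zn : Fin n → Xh) =>
    (if xn i = x then (1:ℝ) else 0) *
    (if zn i = z then 1 else 0) * ((∏ j ∈ univ.erase i, pX (xn j)) * W xn zn))]
  have h1 : ∀ xn zn, ∑ z, (if xn i = x then (1:ℝ) else 0) *
      (if zn i = z then 1 else 0) * ((∏ j ∈ univ.erase i, pX (xn j)) * W xn zn)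
      = (if xn i = x then (1:ℝ) else 0) * ((∏ j ∈ univ.erase i, pX (xn j)) * W xn zn) := by
    intro xn zn
    by_cases h : xn i = x <;> simp [h, ite_mul, Finset.sum_ite_eq]
  rw [Finset.sum_congr rfl fun xn _ => Finset.sum_congr rfl fun zn _ => h1 xn zn]
  have h2 : ∀ xn : Fin n → X, ∑ zn, (if xn i = x then (1:ℝ) else 0) *
      ((∏ j ∈ univ.erase i, pX (xn j)) * W xn zn)
      = (if xn i = x then (1:ℝ) else 0) * ∏ j ∈ univ.erase i, pX (xn j) := by
    intro xn
    rw [← Finset.mul_sum, ← Finset.mul_sum, hW2 xn, mul_one]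
  rw [Finset.sum_congr rfl fun xn _ => h2 xn]
  exact sum_ite_erase_prod pX i hpX1 x

end chan

section markov
variable {X Y Xh : Type*} [Fintype X] [Fintype Y] [Fintype Xh]
  [DecidableEq X] [DecidableEq Y] [DecidableEq Xh]
  {n : ℕ} (pxy : X → Y → ℝ) (pX : X → ℝ) (W : (Fin n → X) → (Fin n → Xh) → ℝ)

/-- Markov-chain identity: the `(Y_i, X̂_i)` marginal factors through `avgChan`. -/
lemma margin_markov (hpX : ∀ x, pX x = ∑ y, pxy x y) (i : Fin n) (y : Y) (z : Xh) :
    margin (fun yn zn => ∑ xn, (∏ j, pxy (xn j) (yn j)) * W xn zn) i y z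
      = ∑ x, pxy x y * avgChan pX W i x z := by
  unfold margin avgChan
  -- LHS
  have hL : ∀ (yn : Fin n → Y) (zn : Fin n → Xh),
      (if yn i = y then (1:ℝ) else 0) * (if zn i = z then 1 else 0) *
        ∑ xn, (∏ j, pxy (xn j) (yn j)) * W xn zn
      = ∑ xn, (if yn i = y then (1:ℝ) else 0) * (if zn i = z then 1 else 0) *
          ((∏ j, pxy (xn j) (yn j)) * W xn zn) := by
    intro yn zn
    rw [Finset.mul_sum]
  rw [Finset.sum_congr rfl fun yn _ => Finset.sum_congr rfl fun zn _ => hL yn zn]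
  rw [sum_swap3 (fun (yn : Fin n → Y) (zn : Fin n → Xh) (xn : Fin n → X) =>
    (if yn i = y then (1:ℝ) else 0) *
    (if zn i = z then 1 else 0) * ((∏ j, pxy (xn j) (yn j)) * W xn zn))]
  have hinner : ∀ (zn : Fin n → Xh) (xn : Fin n → X),
      ∑ yn : Fin n → Y, (if yn i = y then (1:ℝ) else 0) * (if zn i = z then 1 else 0) *
          ((∏ j, pxy (xn j) (yn j)) * W xn zn)
      = ((if zn i = z then (1:ℝ) else 0) * W xn zn) *
          (pxy (xn i) y * ∏ j ∈ univ.erase i, pX (xn j)) := by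
    intro zn xn
    have e1 : ∀ yn : Fin n → Y, (if yn i = y then (1:ℝ) else 0) *
        (if zn i = z then 1 else 0) * ((∏ j, pxy (xn j) (yn j)) * W xn zn)
        = ((if zn i = z then (1:ℝ) else 0) * W xn zn) *
            ((if yn i = y then (1:ℝ) else 0) * ∏ j, pxy (xn j) (yn j)) := by
      intro yn; ring
    rw [Finset.sum_congr rfl fun yn _ => e1 yn, ← Finset.mul_sum,
      sum_pi_ite (fun j b => pxy (xn j) b) i y]
    congr 2
    exact Finset.prod_congr rfl fun j _ => (hpX (xn j)).symm
  rw [Finset.sum_congr rfl fun zn _ => Finset.sum_congr rfl fun xn _ => hinner zn xn]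
  -- RHS
  have hR : ∀ x : X, pxy x y * ∑ xn, ∑ zn, (if xn i = x then (1:ℝ) else 0) *
      (if zn i = z then 1 else 0) * ((∏ j ∈ univ.erase i, pX (xn j)) * W xn zn)
      = ∑ xn, ∑ zn, pxy x y * ((if xn i = x then (1:ℝ) else 0) *
          (if zn i = z then 1 else 0) * ((∏ j ∈ univ.erase i, pX (xn j)) * W xn zn)) := by
    intro x
    rw [Finset.mul_sum]
    exact Finset.sum_congr rfl fun xn _ => Finset.mul_sum _ _ _
  rw [Finset.sum_congr rfl fun x _ => hR x]
  rw [sum_swap3 (fun (x : X) (xn : Fin n → X) (zn : Fin n → Xh) =>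
    pxy x y * ((if xn i = x then (1:ℝ) else 0) *
    (if zn i = z then 1 else 0) * ((∏ j ∈ univ.erase i, pX (xn j)) * W xn zn)))]
  have hcoll : ∀ (xn : Fin n → X) (zn : Fin n → Xh),
      ∑ x, pxy x y * ((if xn i = x then (1:ℝ) else 0) *
        (if zn i = z then 1 else 0) * ((∏ j ∈ univ.erase i, pX (xn j)) * W xn zn))
      = pxy (xn i) y * ((if zn i = z then (1:ℝ) else 0) *
          ((∏ j ∈ univ.erase i, pX (xn j)) * W xn zn)) := by
    intro xn zn
    simp [mul_ite, ite_mul, mul_zero, zero_mul, Finset.sum_ite_eq]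
  rw [Finset.sum_congr rfl fun xn _ => Finset.sum_congr rfl fun zn _ => hcoll xn zn]
  rw [Finset.sum_comm]
  exact Finset.sum_congr rfl fun zn _ => Finset.sum_congr rfl fun xn _ => by ring

/-- Cost identity for the `i`-th induced channel. -/
lemma avgChan_cost (c : X → Xh → ℝ) (i : Fin n) :
    ∑ x, ∑ z, pX x * avgChan pX W i x z * c x z
      = ∑ xn, ∑ zn, (∏ j, pX (xn j)) * W xn zn * c (xn i) (zn i) := by
  unfold avgChan
  have h1 : ∀ (x : X) (z : Xh), pX x * (∑ xn, ∑ zn, (if xn i = x then (1:ℝ) else 0) *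
      (if zn i = z then 1 else 0) * ((∏ j ∈ univ.erase i, pX (xn j)) * W xn zn)) * c x z
      = ∑ xn, ∑ zn, pX x * ((if xn i = x then (1:ℝ) else 0) *
          (if zn i = z then 1 else 0) * ((∏ j ∈ univ.erase i, pX (xn j)) * W xn zn)) * c x z := by
    intro x z
    rw [Finset.mul_sum, Finset.sum_mul]
    refine Finset.sum_congr rfl fun xn _ => ?_
    rw [Finset.mul_sum, Finset.sum_mul]
  rw [Finset.sum_congr rfl fun x _ => Finset.sum_congr rfl fun z _ => h1 x z]
  rw [sum_swap4 (fun (x : X) (z : Xh) (xn : Fin n → X) (zn : Fin n → Xh) =>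
    pX x * ((if xn i = x then (1:ℝ) else 0) *
    (if zn i = z then 1 else 0) * ((∏ j ∈ univ.erase i, pX (xn j)) * W xn zn)) * c x z)]
  refine Finset.sum_congr rfl fun xn _ => Finset.sum_congr rfl fun zn _ => ?_
  have h2 : ∑ x, ∑ z, pX x * ((if xn i = x then (1:ℝ) else 0) *
      (if zn i = z then 1 else 0) * ((∏ j ∈ univ.erase i, pX (xn j)) * W xn zn)) * c x z
      = pX (xn i) * ((∏ j ∈ univ.erase i, pX (xn j)) * W xn zn) * c (xn i) (zn i) := by
    simp [mul_ite, ite_mul, mul_zero, zero_mul, Finset.sum_ite_eq]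
  rw [h2, ← Finset.mul_prod_erase univ (fun j => pX (xn j)) (mem_univ i)]
  ring

end markov

/-- Converse part of the non-asymptotic minimum average erasure cost. -/
theorem stmt2 {X Y Xh : Type*} [Fintype X] [Fintype Y] [Fintype Xh] (n : ℕ) (hn : 0 < n)
    (pxy : X → Y → ℝ) (hpxy : IsPMF2 pxy)
    (W : (Fin n → X) → (Fin n → Xh) → ℝ) (hW : IsChannel W)
    (c : X → Xh → ℝ) (hc : ∀ x z, 0 ≤ c x z) (ε Γ : ℝ)
    (hMI : MI (fun yn zn => ∑ xn, iidJoint n pxy W yn xn zn) ≤ ε)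
    (hcost : costn n pxy W c ≤ Γ) :
    sInf {v | ∃ K : X → Xh → ℝ, IsChannel K ∧ MI (singleYZ pxy K) ≤ ε / n ∧
        v = singleCost pxy K c} ≤ Γ := by
  classical
  have hnR : (0:ℝ) < n := Nat.cast_pos.2 hn
  set pX : X → ℝ := fun x => ∑ y, pxy x y with hpXdef
  set pY : Y → ℝ := fun y => ∑ x, pxy x y with hpYdef
  set q : (Fin n → Y) → (Fin n → Xh) → ℝ :=
    fun yn zn => ∑ xn, iidJoint n pxy W yn xn zn with hqdef
  set K : X → Xh → ℝ := fun x z => (n:ℝ)⁻¹ * ∑ i, avgChan pX W i x z with hKdef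
  have hpX0 : ∀ x, 0 ≤ pX x := fun x => Finset.sum_nonneg fun y _ => hpxy.1 x y
  have hpX1 : ∑ x, pX x = 1 := hpxy.2
  have hpXe : ∀ x, pX x = ∑ y, pxy x y := fun x => rfl
  have hpY0 : ∀ y, 0 ≤ pY y := fun y => Finset.sum_nonneg fun x _ => hpxy.1 x y
  have hpY1 : ∑ y, pY y = 1 := by
    rw [hpYdef]
    rw [Finset.sum_comm]
    exact hpxy.2
  have hq0 : ∀ yn zn, 0 ≤ q yn zn := by
    intro yn zn
    refine Finset.sum_nonneg fun xn _ => mul_nonneg ?_ (hW.1 xn zn)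
    exact Finset.prod_nonneg fun i _ => hpxy.1 (xn i) (yn i)
  have hrowq : ∀ yn, ∑ zn, q yn zn = ∏ j, pY (yn j) := by
    intro yn
    rw [hqdef]
    simp only [iidJoint]
    rw [Finset.sum_comm]
    rw [Finset.sum_congr rfl fun xn (_ : xn ∈ univ) => by
      rw [← Finset.mul_sum, hW.2 xn, mul_one]]
    rw [← Fintype.prod_sum (fun (j : Fin n) (x : X) => pxy x (yn j))]
  have hq1 : ∑ yn, ∑ zn, q yn zn = 1 := by
    rw [Finset.sum_congr rfl fun yn (_ : yn ∈ univ) => hrowq yn,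
      ← Fintype.prod_sum (fun (_ : Fin n) (y : Y) => pY y)]
    simp [hpY1]
  have hKchan : IsChannel K := by
    constructor
    · intro x z
      exact mul_nonneg (inv_nonneg.2 (le_of_lt hnR))
        (Finset.sum_nonneg fun i _ => avgChan_nonneg pX W i hpX0 hW.1 x z)
    · intro x
      rw [hKdef]
      simp only
      rw [← Finset.mul_sum, Finset.sum_comm,
        Finset.sum_congr rfl fun i (_ : i ∈ univ) => avgChan_sum pX W i hpX1 hW.2 x,
        Finset.sum_const, Finset.card_univ, Fintype.card_fin, nsmul_eq_mul, mul_one,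
        inv_mul_cancel₀ (ne_of_gt hnR)]
  have hmargin : ∀ (i : Fin n) (y : Y) (z : Xh),
      margin q i y z = ∑ x, pxy x y * avgChan pX W i x z := by
    intro i y z
    have hqeq : q = fun yn zn => ∑ xn, (∏ j, pxy (xn j) (yn j)) * W xn zn := rfl
    rw [hqeq]
    exact margin_markov pxy pX W hpXe i y z
  have hrowm : ∀ (i : Fin n) (y : Y), ∑ z, margin q i y z = pY y :=
    fun i y => margin_row q pY hpY1 hrowq i y
  have hsingle : singleYZ pxy K = fun y z => (n:ℝ)⁻¹ * ∑ i, margin q i y z := by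
    funext y z
    simp only [singleYZ, hKdef]
    rw [Finset.sum_congr rfl fun x (_ : x ∈ univ) => show
      pxy x y * ((n:ℝ)⁻¹ * ∑ i, avgChan pX W i x z)
        = (n:ℝ)⁻¹ * ∑ i, pxy x y * avgChan pX W i x z by
        rw [← Finset.mul_sum]; ring]
    rw [← Finset.mul_sum, Finset.sum_comm]
    congr 1
    exact Finset.sum_congr rfl fun i _ => (hmargin i y z).symm
  have hcosteq : singleCost pxy K c = costn n pxy W c := by
    have hL : ∀ x z, (∑ y, pxy x y) * K x z * c x z
        = (n:ℝ)⁻¹ * ∑ i, pX x * avgChan pX W i x z * c x z := by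
      intro x z
      have h1 : ∑ i, pX x * avgChan pX W i x z * c x z
          = pX x * (∑ i, avgChan pX W i x z) * c x z := by
        rw [← Finset.sum_mul, ← Finset.mul_sum]
      rw [h1, show (∑ y, pxy x y) = pX x from rfl, hKdef]
      ring
    have lhs_eq : singleCost pxy K c = (n:ℝ)⁻¹ * ∑ i, ∑ xn, ∑ zn,
        (∏ j, pX (xn j)) * W xn zn * c (xn i) (zn i) := by
      unfold singleCost
      rw [Finset.sum_congr rfl fun x (_ : x ∈ univ) =>
        Finset.sum_congr rfl fun z (_ : z ∈ univ) => hL x z]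
      rw [Finset.sum_congr rfl fun x (_ : x ∈ univ) => (Finset.mul_sum _ _ _).symm,
        ← Finset.mul_sum]
      congr 1
      rw [sum_swap3 (fun (x : X) (z : Xh) (i : Fin n) =>
        pX x * avgChan pX W i x z * c x z)]
      rw [sum_swap3 (fun (z : Xh) (i : Fin n) (x : X) =>
        pX x * avgChan pX W i x z * c x z)]
      exact Finset.sum_congr rfl fun i _ => avgChan_cost pX W c i
    have rhs_eq : costn n pxy W c = (n:ℝ)⁻¹ * ∑ i, ∑ xn, ∑ zn,
        (∏ j, pX (xn j)) * W xn zn * c (xn i) (zn i) := by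
      unfold costn
      have hR : ∀ (xn : Fin n → X) (zn : Fin n → Xh),
          (∏ i, ∑ y, pxy (xn i) y) * W xn zn *
            ((1 / (n : ℝ)) * ∑ i, c (xn i) (zn i))
          = ∑ i, (n:ℝ)⁻¹ * ((∏ j, pX (xn j)) * W xn zn * c (xn i) (zn i)) := by
        intro xn zn
        rw [Finset.mul_sum, Finset.mul_sum]
        refine Finset.sum_congr rfl fun i _ => ?_
        rw [show (∏ i, ∑ y, pxy (xn i) y) = ∏ j, pX (xn j) from rfl, one_div]
        ring
      rw [Finset.sum_congr rfl fun xn (_ : xn ∈ univ) =>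
        Finset.sum_congr rfl fun zn (_ : zn ∈ univ) => hR xn zn]
      rw [sum_swap3 (fun (xn : Fin n → X) (zn : Fin n → Xh) (i : Fin n) =>
        (n:ℝ)⁻¹ * ((∏ j, pX (xn j)) * W xn zn * c (xn i) (zn i)))]
      rw [sum_swap3 (fun (zn : Fin n → Xh) (i : Fin n) (xn : Fin n → X) =>
        (n:ℝ)⁻¹ * ((∏ j, pX (xn j)) * W xn zn * c (xn i) (zn i)))]
      rw [Finset.sum_congr rfl fun i (_ : (i : Fin n) ∈ univ) =>
        Finset.sum_congr rfl fun xn (_ : xn ∈ univ) => (Finset.mul_sum _ _ _).symm]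
      rw [Finset.sum_congr rfl fun i (_ : (i : Fin n) ∈ univ) =>
        (Finset.mul_sum _ _ _).symm, ← Finset.mul_sum]
    rw [lhs_eq, rhs_eq]
  have hMIfinal : MI (singleYZ pxy K) ≤ ε / n := by
    rw [hsingle]
    have h1 := mi_avg_le hn (fun i y z => margin q i y z) pY
      (fun i y z => margin_nonneg q i hq0 y z) (fun i y => hrowm i y)
    have h2 := superadd q pY hq0 hq1 hpY0 hpY1 hrowq
    have h3 : (n:ℝ)⁻¹ * (∑ i : Fin n, ∑ y, ∑ z, margin q i y z *
          Real.log (margin q i y z / (pY y * ∑ y', margin q i y' z)))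
        ≤ (n:ℝ)⁻¹ * MI q :=
      mul_le_mul_of_nonneg_left h2 (inv_nonneg.2 hnR.le)
    have h4 : (n:ℝ)⁻¹ * MI q ≤ (n:ℝ)⁻¹ * ε :=
      mul_le_mul_of_nonneg_left hMI (inv_nonneg.2 hnR.le)
    have h5 := le_trans (le_trans (le_trans h1 h3) h4) (le_of_eq (inv_mul_eq_div (n:ℝ) ε))
    exact h5
  have hbdd : BddBelow {v | ∃ K : X → Xh → ℝ, IsChannel K ∧ MI (singleYZ pxy K) ≤ ε / n ∧
      v = singleCost pxy K c} := by
    refine ⟨0, fun v hv => ?_⟩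
    obtain ⟨K', hK', _, rfl⟩ := hv
    refine Finset.sum_nonneg fun x _ => Finset.sum_nonneg fun z _ => ?_
    exact mul_nonneg (mul_nonneg (Finset.sum_nonneg fun y _ => hpxy.1 x y)
      (hK'.1 x z)) (hc x z)
  exact csInf_le_of_le hbdd ⟨K, hKchan, hMIfinal, rfl⟩ (by rw [hcosteq]; exact hcost)
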